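/- arXiv:1309.5991 — 3 statements merged into one kernel-verified Lean document; each statement's English description precedes it below -/
import Mathlib

section
/- Let I = [a,b] be a real interval and let F : I → ℝ be a positive function. Suppose Q is a finite set of pairwise non-overlapping closed subintervals covering I such that every J ∈ Q satisfies w(J) ≥ (1/2)·F(y) for all y ∈ J (where w(J) denotes the width of J). Then the cardinality of Q is at most ∫_I 2/F(x) dx. -/
open MeasureTheory

theorem continuous_amortization_1d
    (a b : ℝ) (hab : a ≤ b) (F : ℝ → ℝ)
    (hF : ∀ x ∈ Set.Icc a b, 0 < F x)
    (Q : Finset (ℝ × ℝ))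
    (hsub : ∀ J ∈ Q, J.1 ≤ J.2 ∧ Set.Icc J.1 J.2 ⊆ Set.Icc a b)
    (hcover : Set.Icc a b ⊆ ⋃ J ∈ Q, Set.Icc J.1 J.2)
    (hdisj : ∀ J ∈ Q, ∀ K ∈ Q, J ≠ K →
      interior (Set.Icc J.1 J.2) ∩ interior (Set.Icc K.1 K.2) = ∅)
    (hstop : ∀ J ∈ Q, ∀ y ∈ Set.Icc J.1 J.2, J.2 - J.1 ≥ F y / 2) :
    (Q.card : ENNReal) ≤ ∫⁻ x in Set.Icc a b, ENNReal.ofReal (2 / F x) := by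
  classical
  have hw : ∀ J ∈ Q, 0 < J.2 - J.1 := by
    intro J hJ
    have h1 := (hsub J hJ).1
    have hmem : J.1 ∈ Set.Icc J.1 J.2 := ⟨le_refl _, h1⟩
    have h2 := hstop J hJ J.1 hmem
    have h3 := hF J.1 ((hsub J hJ).2 hmem)
    linarith
  have key : ∀ J ∈ Q, (1 : ENNReal) ≤ ∫⁻ x in Set.Ioo J.1 J.2, ENNReal.ofReal (2 / F x) := by
    intro J hJ
    have hwJ := hw J hJ
    have hmono : ∫⁻ _x in Set.Ioo J.1 J.2, ENNReal.ofReal (1 / (J.2 - J.1))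
        ≤ ∫⁻ x in Set.Ioo J.1 J.2, ENNReal.ofReal (2 / F x) := by
      apply setLIntegral_mono' measurableSet_Ioo
      intro x hx
      have hx' : x ∈ Set.Icc J.1 J.2 := Set.Ioo_subset_Icc_self hx
      have hFx := hF x ((hsub J hJ).2 hx')
      have hst := hstop J hJ x hx'
      apply ENNReal.ofReal_le_ofReal
      rw [div_le_div_iff₀ hwJ hFx]
      linarith
    calc (1 : ENNReal) = ENNReal.ofReal (1 / (J.2 - J.1)) * volume (Set.Ioo J.1 J.2) := by
          rw [Real.volume_Ioo, ← ENNReal.ofReal_mul (by positivity)]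
          rw [one_div, inv_mul_cancel₀ (ne_of_gt hwJ), ENNReal.ofReal_one]
      _ = ∫⁻ _x in Set.Ioo J.1 J.2, ENNReal.ofReal (1 / (J.2 - J.1)) :=
          (setLIntegral_const _ _).symm
      _ ≤ _ := hmono
  have hdisj' : (↑Q : Set (ℝ × ℝ)).PairwiseDisjoint (fun J : ℝ × ℝ => Set.Ioo J.1 J.2) := by
    intro J hJ K hK hne
    have h := hdisj J hJ K hK hne
    rw [interior_Icc, interior_Icc] at h
    exact Set.disjoint_iff_inter_eq_empty.mpr h
  have hunion : (⋃ J ∈ Q, Set.Ioo J.1 J.2) ⊆ Set.Icc a b := by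
    intro x hx
    simp only [Set.mem_iUnion] at hx
    obtain ⟨J, hJ, hxJ⟩ := hx
    exact (hsub J hJ).2 (Set.Ioo_subset_Icc_self hxJ)
  calc (Q.card : ENNReal) = ∑ _J ∈ Q, (1 : ENNReal) := by simp
    _ ≤ ∑ J ∈ Q, ∫⁻ x in Set.Ioo J.1 J.2, ENNReal.ofReal (2 / F x) :=
        Finset.sum_le_sum key
    _ = ∫⁻ x in ⋃ J ∈ Q, Set.Ioo J.1 J.2, ENNReal.ofReal (2 / F x) :=
        (lintegral_biUnion_finset hdisj' (fun J _ => measurableSet_Ioo) _).symm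
    _ ≤ ∫⁻ x in Set.Icc a b, ENNReal.ofReal (2 / F x) :=
        lintegral_mono' (Measure.restrict_mono hunion le_rfl) le_rfl
end

section
/- Let I be a real interval, F : I → ℝ a positive function, and g : ℝ → ℝ a positive decreasing function. Suppose Q is a finite set of pairwise non-overlapping closed subintervals covering I such that every J ∈ Q satisfies w(J) ≥ (1/2)·F(y) for all y ∈ J. Then ∑_{J ∈ Q} g(w(J)) ≤ ∫_I 2·g(F(x)/2)/F(x) dx. -/
open MeasureTheory

theorem continuous_amortization_cost
    (a b : ℝ) (hab : a ≤ b) (F : ℝ → ℝ)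
    (hF : ∀ x ∈ Set.Icc a b, 0 < F x)
    (g : ℝ → ℝ) (hgpos : ∀ t, 0 < g t)
    (hgdec : ∀ s t : ℝ, s ≤ t → g t ≤ g s)
    (Q : Finset (ℝ × ℝ))
    (hsub : ∀ J ∈ Q, J.1 ≤ J.2 ∧ Set.Icc J.1 J.2 ⊆ Set.Icc a b)
    (hcover : Set.Icc a b ⊆ ⋃ J ∈ Q, Set.Icc J.1 J.2)
    (hdisj : ∀ J ∈ Q, ∀ K ∈ Q, J ≠ K →
      interior (Set.Icc J.1 J.2) ∩ interior (Set.Icc K.1 K.2) = ∅)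
    (hstop : ∀ J ∈ Q, ∀ y ∈ Set.Icc J.1 J.2, J.2 - J.1 ≥ F y / 2) :
    ENNReal.ofReal (∑ J ∈ Q, g (J.2 - J.1)) ≤
      ∫⁻ x in Set.Icc a b, ENNReal.ofReal (2 * g (F x / 2) / F x) := by
  classical
  have hwpos : ∀ J ∈ Q, (0:ℝ) < J.2 - J.1 := by
    intro J hJ
    have h1 := (hsub J hJ).1
    have hmem : J.1 ∈ Set.Icc J.1 J.2 := ⟨le_refl _, h1⟩
    have h2 := hstop J hJ J.1 hmem
    have h3 := hF J.1 ((hsub J hJ).2 hmem)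
    linarith
  have key : ∀ J ∈ Q, ENNReal.ofReal (g (J.2 - J.1)) ≤
      ∫⁻ x in Set.Ioo J.1 J.2, ENNReal.ofReal (2 * g (F x / 2) / F x) := by
    intro J hJ
    set w := J.2 - J.1 with hw
    have hwp := hwpos J hJ
    have hb : ∀ x ∈ Set.Ioo J.1 J.2, ENNReal.ofReal (g w / w) ≤
        ENNReal.ofReal (2 * g (F x / 2) / F x) := by
      intro x hx
      have hx' : x ∈ Set.Icc J.1 J.2 := Set.Ioo_subset_Icc_self hx
      have hFx : 0 < F x := hF x ((hsub J hJ).2 hx')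
      have hstopx := hstop J hJ x hx'
      apply ENNReal.ofReal_le_ofReal
      have h2 : 2 * g (F x / 2) / F x = g (F x / 2) / (F x / 2) := by
        field_simp
      rw [h2]
      have hg1 : g w ≤ g (F x / 2) := hgdec _ _ (by linarith)
      exact div_le_div₀ (hgpos _).le hg1 (by positivity) hstopx
    calc ENNReal.ofReal (g w)
        = ENNReal.ofReal (g w / w) * volume (Set.Ioo J.1 J.2) := by
          rw [Real.volume_Ioo, ← ENNReal.ofReal_mul (div_nonneg (hgpos _).le hwp.le)]
          congr 1
          field_simp
      _ = ∫⁻ _ in Set.Ioo J.1 J.2, ENNReal.ofReal (g w / w) := by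
          rw [setLIntegral_const, mul_comm]
      _ ≤ ∫⁻ x in Set.Ioo J.1 J.2, ENNReal.ofReal (2 * g (F x / 2) / F x) :=
          setLIntegral_mono' measurableSet_Ioo hb
  have hpd : Set.PairwiseDisjoint (↑Q) (fun J : ℝ × ℝ => Set.Ioo J.1 J.2) := by
    intro J hJ K hK hne
    simp only [Function.onFun]
    rw [Set.disjoint_iff_inter_eq_empty]
    have := hdisj J hJ K hK hne
    simpa [interior_Icc] using this
  calc ENNReal.ofReal (∑ J ∈ Q, g (J.2 - J.1))
      ≤ ∑ J ∈ Q, ENNReal.ofReal (g (J.2 - J.1)) := le_of_eq (ENNReal.ofReal_sum_of_nonneg (fun J _ => (hgpos _).le))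
    _ ≤ ∑ J ∈ Q, ∫⁻ x in Set.Ioo J.1 J.2, ENNReal.ofReal (2 * g (F x / 2) / F x) :=
        Finset.sum_le_sum key
    _ = ∫⁻ x in ⋃ J ∈ Q, Set.Ioo J.1 J.2, ENNReal.ofReal (2 * g (F x / 2) / F x) :=
        (lintegral_biUnion_finset hpd (fun J _ => measurableSet_Ioo) _).symm
    _ ≤ ∫⁻ x in Set.Icc a b, ENNReal.ofReal (2 * g (F x / 2) / F x) := by
        apply lintegral_mono_set
        intro x hx
        simp only [Set.mem_iUnion] at hx
        obtain ⟨J, hJ, hxJ⟩ := hx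
        exact (hsub J hJ).2 (Set.Ioo_subset_Icc_self hxJ)
end

section
/- Let α ∈ ℂ with Im(α) ≠ 0 and let a < b be real numbers with a ≤ Re(α) ≤ b. Then −∫_a^{Re(α)} 3·ln(Re(α)−x+|α−x|)/|α−x| dx − ∫_{Re(α)}^{b} 3·ln(x−Re(α)+|α−x|)/|α−x| dx = 3·(ln|Im(α)|)² − (3/2)·(ln(b−Re(α)+|α−b|))² − (3/2)·(ln(Re(α)−a+|α−a|))². -/
theorem sqfreeeval_bit_integral_complex_root
    (α : ℂ) (him : α.im ≠ 0) (a b : ℝ) (hab : a < b)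
    (ha : a ≤ α.re) (hb : α.re ≤ b) :
    (-(∫ x in a..α.re,
          3 * Real.log (α.re - x + ‖α - x‖) / ‖α - x‖) -
        ∫ x in α.re..b,
          3 * Real.log (x - α.re + ‖α - x‖) / ‖α - x‖) =
      3 * (Real.log |α.im|) ^ 2 -
        (3 / 2) * (Real.log (b - α.re + ‖α - b‖)) ^ 2 -
        (3 / 2) * (Real.log (α.re - a + ‖α - a‖)) ^ 2 := by
  set r := α.re with hr
  set c := α.im with hc
  have habs : ∀ x : ℝ, ‖α - x‖ = Real.sqrt ((x - r) ^ 2 + c ^ 2) := by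
    intro x
    rw [Complex.norm_def, Complex.normSq_apply]
    simp only [Complex.sub_re, Complex.sub_im, Complex.ofReal_re, Complex.ofReal_im]
    congr 1
    ring
  have hpos : ∀ x : ℝ, 0 < (x - r) ^ 2 + c ^ 2 := fun x => by positivity
  have hsqpos : ∀ x : ℝ, 0 < Real.sqrt ((x - r) ^ 2 + c ^ 2) :=
    fun x => Real.sqrt_pos.mpr (hpos x)
  have habslt : ∀ x : ℝ, |x - r| < Real.sqrt ((x - r) ^ 2 + c ^ 2) := by
    intro x
    rw [show |x - r| = Real.sqrt ((x - r) ^ 2) by rw [Real.sqrt_sq_eq_abs]]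
    have hc2 : 0 < c ^ 2 := by positivity
    exact Real.sqrt_lt_sqrt (sq_nonneg _) (by nlinarith)
  have hupos : ∀ x : ℝ, 0 < x - r + Real.sqrt ((x - r) ^ 2 + c ^ 2) := by
    intro x
    have := habslt x
    have := neg_abs_le (x - r)
    linarith
  have hvpos : ∀ x : ℝ, 0 < r - x + Real.sqrt ((x - r) ^ 2 + c ^ 2) := by
    intro x
    have := habslt x
    have := le_abs_self (x - r)
    linarith
  have hds : ∀ x : ℝ, HasDerivAt (fun y => Real.sqrt ((y - r) ^ 2 + c ^ 2))
      ((x - r) / Real.sqrt ((x - r) ^ 2 + c ^ 2)) x := by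
    intro x
    have h1 : HasDerivAt (fun y : ℝ => (y - r) ^ 2 + c ^ 2) (2 * (x - r)) x := by
      have := (((hasDerivAt_id x).sub_const r).pow 2).add_const (c ^ 2)
      simpa using this
    have := (Real.hasDerivAt_sqrt (ne_of_gt (hpos x))).comp x h1
    refine this.congr_deriv ?_
    field_simp
  -- F : antiderivative on the right piece
  have hF : ∀ x : ℝ, HasDerivAt
      (fun y => (3 / 2) * Real.log (y - r + Real.sqrt ((y - r) ^ 2 + c ^ 2)) ^ 2)
      (3 * Real.log (x - r + Real.sqrt ((x - r) ^ 2 + c ^ 2)) /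
        Real.sqrt ((x - r) ^ 2 + c ^ 2)) x := by
    intro x
    have hu : HasDerivAt (fun y => y - r + Real.sqrt ((y - r) ^ 2 + c ^ 2))
        (1 + (x - r) / Real.sqrt ((x - r) ^ 2 + c ^ 2)) x :=
      ((hasDerivAt_id x).sub_const r).add (hds x)
    have hlog := (Real.hasDerivAt_log (ne_of_gt (hupos x))).comp x hu
    have := ((hlog.pow 2).const_mul (3 / 2 : ℝ))
    refine this.congr_deriv ?_
    simp only [Function.comp_apply]
    push_cast
    have hs := hsqpos x
    have hu0 := hupos x
    field_simp
    ring
  -- G : antiderivative on the left piece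
  have hG : ∀ x : ℝ, HasDerivAt
      (fun y => -((3 / 2) * Real.log (r - y + Real.sqrt ((y - r) ^ 2 + c ^ 2)) ^ 2))
      (3 * Real.log (r - x + Real.sqrt ((x - r) ^ 2 + c ^ 2)) /
        Real.sqrt ((x - r) ^ 2 + c ^ 2)) x := by
    intro x
    have hu : HasDerivAt (fun y => r - y + Real.sqrt ((y - r) ^ 2 + c ^ 2))
        (-1 + (x - r) / Real.sqrt ((x - r) ^ 2 + c ^ 2)) x := by
      exact (((hasDerivAt_const x r).sub (hasDerivAt_id x)).add (hds x)).congr_deriv (by simp)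
    have hlog := (Real.hasDerivAt_log (ne_of_gt (hvpos x))).comp x hu
    have := ((hlog.pow 2).const_mul (3 / 2 : ℝ)).neg
    refine this.congr_deriv ?_
    simp only [Function.comp_apply]
    push_cast
    have hs := hsqpos x
    have hv0 := hvpos x
    field_simp
    ring
  -- continuity / integrability
  have hcs : Continuous (fun x : ℝ => Real.sqrt ((x - r) ^ 2 + c ^ 2)) := by
    continuity
  have hcf : Continuous (fun x : ℝ =>
      3 * Real.log (x - r + Real.sqrt ((x - r) ^ 2 + c ^ 2)) /
        Real.sqrt ((x - r) ^ 2 + c ^ 2)) := by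
    apply Continuous.div
    · exact continuous_const.mul (((continuous_id.sub continuous_const).add hcs).log
        (fun x => ne_of_gt (hupos x)))
    · exact hcs
    · exact fun x => ne_of_gt (hsqpos x)
  have hcg : Continuous (fun x : ℝ =>
      3 * Real.log (r - x + Real.sqrt ((x - r) ^ 2 + c ^ 2)) /
        Real.sqrt ((x - r) ^ 2 + c ^ 2)) := by
    apply Continuous.div
    · exact continuous_const.mul (((continuous_const.sub continuous_id).add hcs).log
        (fun x => ne_of_gt (hvpos x)))
    · exact hcs
    · exact fun x => ne_of_gt (hsqpos x)
  have hI1 : (∫ x in a..r,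
      3 * Real.log (r - x + Real.sqrt ((x - r) ^ 2 + c ^ 2)) /
        Real.sqrt ((x - r) ^ 2 + c ^ 2)) =
      -((3 / 2) * Real.log (r - r + Real.sqrt ((r - r) ^ 2 + c ^ 2)) ^ 2) -
      -((3 / 2) * Real.log (r - a + Real.sqrt ((a - r) ^ 2 + c ^ 2)) ^ 2) :=
    intervalIntegral.integral_eq_sub_of_hasDerivAt (fun x _ => hG x)
      (hcg.intervalIntegrable a r)
  have hI2 : (∫ x in r..b,
      3 * Real.log (x - r + Real.sqrt ((x - r) ^ 2 + c ^ 2)) /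
        Real.sqrt ((x - r) ^ 2 + c ^ 2)) =
      (3 / 2) * Real.log (b - r + Real.sqrt ((b - r) ^ 2 + c ^ 2)) ^ 2 -
      (3 / 2) * Real.log (r - r + Real.sqrt ((r - r) ^ 2 + c ^ 2)) ^ 2 :=
    intervalIntegral.integral_eq_sub_of_hasDerivAt (fun x _ => hF x)
      (hcf.intervalIntegrable r b)
  have hcc : Real.sqrt ((r - r) ^ 2 + c ^ 2) = |c| := by
    simp [Real.sqrt_sq_eq_abs]
  simp only [habs]
  rw [hI1, hI2, hcc]
  ring
end
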